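/- The finite circle adoption level is strictly below the infinite-line adoption level: let p, q > 0 and let M ≥ 1 be an integer with q ≠ j·p for every integer 1 ≤ j ≤ M−1. Then for every t > 0, f_circle(t; p, q, M) < f_1D(t; p, q), equivalently S_circle(t; p, q, M) > S_1D(t; p, q). -/

import Mathlib

/-- The coefficient `c_{M−k}` of the explicit circle formula, as a function of
`k` (so `dcoef p q k = c_{M−k}`; this is independent of `M`), defined by the
backward recursion
`c_{M−k} = 1 − q^k/∏_{j=1}^{k}(q−jp) − Σ_{j=1}^{k−1} (p^{j−k}(−q)^{k−j}/(k−j)!)·c_{M−j}`. -/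
noncomputable def dcoef (p q : ℝ) : ℕ → ℝ
  | k =>
    1 - q ^ k / (∏ j ∈ Finset.Icc 1 k, (q - (j : ℝ) * p)) -
      ∑ j ∈ (Finset.Ico 1 k).attach,
        (p ^ ((j.1 : ℤ) - (k : ℤ)) * (-q) ^ (k - j.1) / (Nat.factorial (k - j.1)) *
          dcoef p q j.1)
  decreasing_by exact (Finset.mem_Ico.mp j.2).2

/-- Nonadoption probability of a node in the discrete Bass model on a one-sided
homogeneous circle with `M` nodes, external rate `p` and internal rate `q`:
`S_circle(t;p,q,M) = Σ_{k=1}^{M−1} c_k (−q)^{k−1}/(p^{k−1}(k−1)!) e^{(−kp−q)t}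
                     + (−q)^{M−1}/∏_{j=1}^{M−1}(jp−q) · e^{−Mpt}`,
where `c_k = dcoef p q (M−k)`. -/
noncomputable def Scircle (t p q : ℝ) (M : ℕ) : ℝ :=
  (∑ k ∈ Finset.Icc 1 (M - 1),
      dcoef p q (M - k) * ((-q) ^ (k - 1) / (p ^ (k - 1) * Nat.factorial (k - 1))) *
        Real.exp ((-(k : ℝ) * p - q) * t)) +
    ((-q) ^ (M - 1) / (∏ j ∈ Finset.Icc 1 (M - 1), ((j : ℝ) * p - q))) *
      Real.exp (-(M : ℝ) * p * t)

/-- Nonadoption probability of a node in the discrete Bass model on the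
infinite line: `S_1D(t;p,q) = exp(−(p+q)t + q(1−e^{−pt})/p)`. -/
noncomputable def S1D (t p q : ℝ) : ℝ :=
  Real.exp (-(p + q) * t + q * (1 - Real.exp (-p * t)) / p)

noncomputable def Bco (p q : ℝ) (m : ℕ) : ℝ :=
  q ^ m / ∏ j ∈ Finset.Icc 1 m, (q - (j : ℝ) * p)

lemma dcoef_eq (p q : ℝ) (k : ℕ) : dcoef p q k =
    1 - q ^ k / (∏ j ∈ Finset.Icc 1 k, (q - (j : ℝ) * p)) -
      ∑ j ∈ Finset.Ico 1 k,
        (p ^ ((j : ℤ) - (k : ℤ)) * (-q) ^ (k - j) / (Nat.factorial (k - j)) *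
          dcoef p q j) := by
  rw [dcoef]
  rw [Finset.sum_attach (Finset.Ico 1 k)
    (fun j => p ^ ((j : ℤ) - (k : ℤ)) * (-q) ^ (k - j) / (Nat.factorial (k - j)) * dcoef p q j)]

lemma key (p q : ℝ) (hp : p ≠ 0) (m : ℕ) :
    (∑ j ∈ Finset.Icc 1 m,
        dcoef p q j * ((-q) ^ (m - j) / (p ^ (m - j) * Nat.factorial (m - j)))) +
      Bco p q m = 1 := by
  cases m with
  | zero => simp [Bco]
  | succ n =>
    rw [Finset.sum_Icc_succ_top (by omega : 1 ≤ n + 1)]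
    rw [dcoef_eq p q (n + 1)]
    rw [Bco]
    rw [show ∑ j ∈ Finset.Icc 1 n,
        dcoef p q j * ((-q) ^ (n + 1 - j) / (p ^ (n + 1 - j) * Nat.factorial (n + 1 - j)))
        = ∑ j ∈ Finset.Ico 1 (n + 1),
        (p ^ ((j : ℤ) - ((n+1 : ℕ) : ℤ)) * (-q) ^ (n + 1 - j) / (Nat.factorial (n + 1 - j)) *
          dcoef p q j) from ?_]
    · simp
    · rw [Finset.Ico_add_one_right_eq_Icc]
      refine Finset.sum_congr rfl (fun j hj => ?_)
      have hj' : j ≤ n + 1 := le_trans (Finset.mem_Icc.mp hj).2 (by omega)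
      have h1 : (p : ℝ) ^ ((j : ℤ) - ((n+1 : ℕ) : ℤ)) = p ^ j / p ^ (n+1) := by
        rw [zpow_sub₀ hp, zpow_natCast, zpow_natCast]
      have h2 : (p : ℝ) ^ (n + 1 - j) = p ^ (n+1) / p ^ j := pow_sub₀ p hp hj'
      have hfac : ((Nat.factorial (n + 1 - j) : ℝ)) ≠ 0 :=
        Nat.cast_ne_zero.mpr (Nat.factorial_ne_zero _)
      rw [h1, h2]
      field_simp

noncomputable def vf (p q : ℝ) (M k : ℕ) (t : ℝ) : ℝ :=
  (∑ i ∈ Finset.Icc k (M - 1),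
      dcoef p q (M - i) * ((-q) ^ (i - k) / (p ^ (i - k) * Nat.factorial (i - k))) *
        Real.exp ((-(i : ℝ) * p - q) * t)) +
    Bco p q (M - k) * Real.exp (-(M : ℝ) * p * t)

noncomputable def wf (p q : ℝ) (k : ℕ) (t : ℝ) : ℝ :=
  Real.exp ((-(k : ℝ) * p - q) * t + q * (1 - Real.exp (-p * t)) / p)

lemma vf_zero (p q : ℝ) (hp : p ≠ 0) (M k : ℕ) (hk : 1 ≤ k) (hkM : k ≤ M) :
    vf p q M k 0 = 1 := by
  have := key p q hp (M - k)
  rw [vf]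
  simp only [mul_zero, Real.exp_zero, mul_one]
  rw [← this]
  congr 1
  refine Finset.sum_nbij' (fun i => M - i) (fun j => M - j) ?_ ?_ ?_ ?_ ?_
  · intro i hi
    simp only [Finset.mem_Icc] at hi ⊢
    omega
  · intro j hj
    simp only [Finset.mem_Icc] at hj ⊢
    omega
  · intro i hi
    simp only [Finset.mem_Icc] at hi
    omega
  · intro j hj
    simp only [Finset.mem_Icc] at hj
    omega
  · intro i hi
    simp only [Finset.mem_Icc] at hi
    have h1 : M - k - (M - i) = i - k := by omega
    rw [h1]

lemma Bco_step (p q : ℝ) (m : ℕ) (hm : 1 ≤ m)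
    (hne : ∀ j : ℕ, 1 ≤ j → j ≤ m → q - (j : ℝ) * p ≠ 0) :
    (q - (m : ℝ) * p) * Bco p q m = q * Bco p q (m - 1) := by
  obtain ⟨n, rfl⟩ : ∃ n, m = n + 1 := ⟨m - 1, by omega⟩
  have hprod : (∏ j ∈ Finset.Icc 1 n, (q - (j : ℝ) * p)) ≠ 0 :=
    Finset.prod_ne_zero_iff.mpr (fun j hj => hne j (Finset.mem_Icc.mp hj).1
      (by have := (Finset.mem_Icc.mp hj).2; omega))
  have htop : q - ((n+1 : ℕ) : ℝ) * p ≠ 0 := hne (n+1) (by omega) le_rfl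
  rw [Bco, Bco, Finset.prod_Icc_succ_top (by omega : 1 ≤ n + 1)]
  simp only [Nat.add_sub_cancel]
  push_cast at htop ⊢
  field_simp
  ring

lemma hexp (c t : ℝ) : HasDerivAt (fun s => Real.exp (c * s)) (c * Real.exp (c * t)) t := by
  exact (((hasDerivAt_id' t).const_mul c).exp).congr_deriv (by ring)

lemma wf_deriv (p q : ℝ) (hp : p ≠ 0) (k : ℕ) (t : ℝ) :
    HasDerivAt (wf p q k)
      (-((k : ℝ) * p + q) * wf p q k t + q * wf p q (k + 1) t) t := by
  have hg : HasDerivAt (fun s : ℝ => (-(k : ℝ) * p - q) * s + q * (1 - Real.exp (-p * s)) / p)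
      ((-(k : ℝ) * p - q) + q * (p * Real.exp (-p * t)) / p) t := by
    have h1 : HasDerivAt (fun s : ℝ => (-(k : ℝ) * p - q) * s) (-(k : ℝ) * p - q) t := by
      simpa using (hasDerivAt_id t).const_mul (-(k : ℝ) * p - q)
    have h2 : HasDerivAt (fun s : ℝ => Real.exp (-p * s)) (-p * Real.exp (-p * t)) t :=
      hexp (-p) t
    have h3 : HasDerivAt (fun s : ℝ => 1 - Real.exp (-p * s)) (p * Real.exp (-p * t)) t := by
      exact (h2.const_sub 1).congr_deriv (by ring)
    have h4 := (h3.const_mul q).div_const p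
    exact h1.add h4
  have := (Real.hasDerivAt_exp _).comp t hg
  have hw1 : wf p q (k+1) t = Real.exp (-p * t) * wf p q k t := by
    rw [wf, wf, ← Real.exp_add]
    congr 1
    push_cast
    ring
  rw [wf]
  refine this.congr_deriv ?_
  rw [show Real.exp ((-(k : ℝ) * p - q) * t + q * (1 - Real.exp (-p * t)) / p) = wf p q k t from rfl]
  rw [hw1]
  field_simp
  ring

lemma vf_deriv (p q : ℝ) (hp : p ≠ 0) (M k : ℕ) (hk : 1 ≤ k) (hkM : k < M)
    (hne : ∀ j : ℕ, 1 ≤ j → j ≤ M - 1 → q - (j : ℝ) * p ≠ 0) (t : ℝ) :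
    HasDerivAt (vf p q M k)
      (-((k : ℝ) * p + q) * vf p q M k t + q * vf p q M (k + 1) t) t := by
  have hD : HasDerivAt (vf p q M k)
      ((∑ i ∈ Finset.Icc k (M - 1),
        dcoef p q (M - i) * ((-q) ^ (i - k) / (p ^ (i - k) * Nat.factorial (i - k))) *
          ((-(i : ℝ) * p - q) * Real.exp ((-(i : ℝ) * p - q) * t))) +
        Bco p q (M - k) * (-(M : ℝ) * p * Real.exp (-(M : ℝ) * p * t))) t := by
    apply HasDerivAt.add
    · apply HasDerivAt.fun_sum
      intro i _
      exact (hexp (-(i : ℝ) * p - q) t).const_mul _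
    · exact (hexp (-(M : ℝ) * p) t).const_mul _
  convert hD using 1
  -- now a pure algebraic identity
  have hsplit : Finset.Icc k (M-1) = insert k (Finset.Icc (k+1) (M-1)) := by
    ext x
    simp only [Finset.mem_Icc, Finset.mem_insert]
    omega
  have hknotmem : k ∉ Finset.Icc (k+1) (M-1) := by
    simp only [Finset.mem_Icc]; omega
  rw [vf, vf, hsplit, Finset.sum_insert hknotmem, Finset.sum_insert hknotmem]
  rw [Nat.sub_self]
  -- B identity
  have hB : -((k:ℝ) * p + q) * Bco p q (M - k) + q * Bco p q (M - (k+1))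
      = Bco p q (M - k) * (-(M : ℝ) * p) := by
    have hm : 1 ≤ M - k := by omega
    have hstep := Bco_step p q (M - k) hm
      (fun j hj1 hj2 => hne j hj1 (by omega))
    have hMk : M - (k+1) = M - k - 1 := by omega
    have hcast : ((M - k : ℕ) : ℝ) = (M : ℝ) - (k : ℝ) := by
      push_cast [Nat.cast_sub (le_of_lt hkM)]; ring
    rw [hMk, ← hstep, hcast]
    ring
  -- sum identity, termwise
  have hsum : ∀ i ∈ Finset.Icc (k+1) (M-1),
      -((k:ℝ) * p + q) * (dcoef p q (M - i) * ((-q) ^ (i - k) / (p ^ (i - k) * Nat.factorial (i - k))) *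
          Real.exp ((-(i : ℝ) * p - q) * t))
        + q * (dcoef p q (M - i) * ((-q) ^ (i - (k+1)) / (p ^ (i - (k+1)) * Nat.factorial (i - (k+1)))) *
          Real.exp ((-(i : ℝ) * p - q) * t))
      = dcoef p q (M - i) * ((-q) ^ (i - k) / (p ^ (i - k) * Nat.factorial (i - k))) *
          ((-(i : ℝ) * p - q) * Real.exp ((-(i : ℝ) * p - q) * t)) := by
    intro i hi
    simp only [Finset.mem_Icc] at hi
    obtain ⟨n, hn⟩ : ∃ n, i - k = n + 1 := ⟨i - k - 1, by omega⟩
    have hn2 : i - (k+1) = n := by omega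
    have hcast : (i : ℝ) - (k : ℝ) = ((n : ℝ) + 1) := by
      have : i - k = n+1 := hn
      have : (i:ℝ) = (k:ℝ) + (n:ℝ) + 1 := by push_cast [show i = k + n + 1 by omega]; ring
      rw [this]; ring
    rw [hn, hn2]
    have hfac : ((Nat.factorial (n+1) : ℝ)) = ((n:ℝ)+1) * Nat.factorial n := by
      rw [Nat.factorial_succ]; push_cast; ring
    have hfn : ((Nat.factorial n : ℝ)) ≠ 0 := Nat.cast_ne_zero.mpr (Nat.factorial_ne_zero _)
    rw [pow_succ, pow_succ, hfac]
    have h1 : -(i:ℝ) * p - q = -((k:ℝ)*p + q) - ((n:ℝ)+1) * p := by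
      rw [show (i:ℝ) = (k:ℝ) + ((n:ℝ)+1) by linarith [hcast]]
      ring
    rw [h1]
    field_simp
    ring
  rw [← Finset.sum_congr rfl hsum, Finset.sum_add_distrib, ← Finset.mul_sum, ← Finset.mul_sum]
  simp only [pow_zero, Nat.factorial_zero, Nat.cast_one]
  linear_combination Real.exp (-(M:ℝ) * p * t) * hB

lemma comp_lemma (a q : ℝ) (hq : 0 < q) (f g F G : ℝ → ℝ)
    (hf : ∀ s, HasDerivAt f (-a * f s + q * F s) s)
    (hg : ∀ s, HasDerivAt g (-a * g s + q * G s) s)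
    (h0 : f 0 = g 0)
    (hFG : ∀ s, 0 < s → G s < F s)
    (t : ℝ) (ht : 0 < t) : g t < f t := by
  set h : ℝ → ℝ := fun s => Real.exp (a * s) * (f s - g s) with hh_def
  have hh : ∀ s, HasDerivAt h (Real.exp (a * s) * (q * (F s - G s))) s := by
    intro s
    have := (hexp a s).mul ((hf s).sub (hg s))
    refine this.congr_deriv ?_
    rw [Pi.sub_apply]
    ring
  have hmono : StrictMonoOn h (Set.Ici (0:ℝ)) := by
    apply strictMonoOn_of_deriv_pos (convex_Ici 0)
    · exact fun s _ => (hh s).differentiableAt.continuousAt.continuousWithinAt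
    · intro s hs
      rw [interior_Ici] at hs
      rw [(hh s).deriv]
      exact mul_pos (Real.exp_pos _) (mul_pos hq (sub_pos.mpr (hFG s hs)))
  have h0' : h 0 = 0 := by simp [hh_def, h0]
  have hpos : 0 < h t := by
    have := hmono Set.self_mem_Ici (Set.mem_Ici.mpr (le_of_lt ht)) ht
    rwa [h0'] at this
  have hexpos : 0 < Real.exp (a * t) := Real.exp_pos _
  simp only [hh_def] at hpos
  nlinarith

lemma base_case (p q : ℝ) (hp : 0 < p) (hq : 0 < q) (M : ℕ) (hM : 1 ≤ M)
    (t : ℝ) (ht : 0 < t) : wf p q M t < vf p q M M t := by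
  have hempty : Finset.Icc M (M - 1) = ∅ := Finset.Icc_eq_empty (by omega)
  rw [vf, hempty, Nat.sub_self]
  simp only [Finset.sum_empty, zero_add]
  rw [show Bco p q 0 = 1 by simp [Bco]]
  rw [one_mul, wf]
  apply Real.exp_lt_exp.mpr
  have h1 : 1 - p * t < Real.exp (-p * t) := by
    have := Real.add_one_lt_exp (x := -p * t) (by nlinarith)
    linarith
  have h2 : q * (1 - Real.exp (-p * t)) / p < q * t := by
    rw [div_lt_iff₀ hp]
    have : 1 - Real.exp (-p * t) < p * t := by linarith
    nlinarith
  nlinarith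

lemma main_ind (p q : ℝ) (hp : 0 < p) (hq : 0 < q) (M : ℕ) (hM : 1 ≤ M)
    (hne : ∀ j : ℕ, 1 ≤ j → j ≤ M - 1 → q - (j : ℝ) * p ≠ 0) :
    ∀ d k, k + d = M → 1 ≤ k → ∀ t, 0 < t → wf p q k t < vf p q M k t := by
  intro d
  induction d with
  | zero =>
    intro k hkd hk1 t ht
    have hk : k = M := by omega
    rw [hk]
    exact base_case p q hp hq M hM t ht
  | succ n ih =>
    intro k hkd hk1 t ht
    have hkM : k < M := by omega
    refine comp_lemma ((k : ℝ) * p + q) q hq (vf p q M k) (wf p q k)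
      (vf p q M (k+1)) (wf p q (k+1)) ?_ ?_ ?_ ?_ t ht
    · intro s
      exact vf_deriv p q (ne_of_gt hp) M k hk1 hkM hne s
    · intro s
      exact wf_deriv p q (ne_of_gt hp) k s
    · rw [vf_zero p q (ne_of_gt hp) M k hk1 (le_of_lt hkM)]
      simp [wf]
    · intro s hs
      exact ih (k+1) (by omega) (by omega) s hs

lemma Bco_eq (p q : ℝ) (n : ℕ) :
    (-q) ^ n / ∏ j ∈ Finset.Icc 1 n, ((j : ℝ) * p - q) = Bco p q n := by
  rw [Bco]
  have h1 : ∏ j ∈ Finset.Icc 1 n, ((j : ℝ) * p - q)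
      = (-1 : ℝ) ^ n * ∏ j ∈ Finset.Icc 1 n, (q - (j : ℝ) * p) := by
    calc ∏ j ∈ Finset.Icc 1 n, ((j : ℝ) * p - q)
        = ∏ j ∈ Finset.Icc 1 n, ((-1) * (q - (j : ℝ) * p)) :=
          Finset.prod_congr rfl (fun j _ => by ring)
      _ = (-1 : ℝ) ^ (Finset.Icc 1 n).card * ∏ j ∈ Finset.Icc 1 n, (q - (j : ℝ) * p) := by
          rw [Finset.prod_mul_distrib, Finset.prod_const]
      _ = (-1 : ℝ) ^ n * ∏ j ∈ Finset.Icc 1 n, (q - (j : ℝ) * p) := by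
          rw [Nat.card_Icc]
          norm_num
  have h2 : ((-q) : ℝ) ^ n = (-1 : ℝ) ^ n * q ^ n := by
    rw [neg_pow]
  rw [h1, h2, mul_div_mul_left _ _ (pow_ne_zero n (by norm_num : (-1 : ℝ) ≠ 0))]

lemma Scircle_eq_vf (t p q : ℝ) (M : ℕ) : Scircle t p q M = vf p q M 1 t := by
  rw [Scircle, vf, Bco_eq]

lemma S1D_eq_wf (t p q : ℝ) : S1D t p q = wf p q 1 t := by
  rw [S1D, wf]
  congr 1
  push_cast
  ring

/-- The finite circle adoption level is strictly below the infinite-line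
adoption level: for `p, q > 0`, `M ≥ 1` with `q ≠ j·p` for `1 ≤ j ≤ M−1`, and
every `t > 0`, `S_circle(t;p,q,M) > S_1D(t;p,q)`, i.e.
`f_circle(t;p,q,M) < f_1D(t;p,q)`. -/
theorem Scircle_gt_S1D (p q : ℝ) (hp : 0 < p) (hq : 0 < q)
    (M : ℕ) (hM : 1 ≤ M)
    (hnd : ∀ j : ℕ, 1 ≤ j → j ≤ M - 1 → q ≠ (j : ℝ) * p)
    (t : ℝ) (ht : 0 < t) :
    Scircle t p q M > S1D t p q := by
  rw [gt_iff_lt, S1D_eq_wf, Scircle_eq_vf]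
  exact main_ind p q hp hq M hM
    (fun j h1 h2 => sub_ne_zero.mpr (hnd j h1 h2)) (M - 1) 1 (by omega) le_rfl t ht
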